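/- Let β, γ > 0 with β·γ² = 1, and let n ∈ ℕ with n ≥ γ (so that γ/n ≤ 1). Then for every r with 0 < r < min{1, 1/(2γ)}, ( 1 − γ/n + (γ/n)·( 1 − γ/n + (γ/n)·e^{r} )^{n−1} )^{⌊βn⌋} ≤ e^{ r + (1+4γ) r² }. -/

import Mathlib

lemma exp_quadratic_bound {x : ℝ} (h0 : 0 ≤ x) (h1 : x ≤ 1) :
    Real.exp x ≤ 1 + x + x ^ 2 := by
  have habs : |x| ≤ 1 := by rwa [abs_of_nonneg h0]
  have h := Real.exp_bound habs (n := 3) (by norm_num)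
  norm_num [Finset.sum_range_succ, Nat.factorial] at h
  rw [abs_of_nonneg h0] at h
  have h' := abs_le.mp h
  have hx3 : x ^ 3 ≤ x ^ 2 := by nlinarith
  nlinarith [h'.2]

lemma alg_aux (γ r : ℝ) (hγ : 0 < γ) (hr0 : 0 < r) (hr1 : r < 1) :
    γ * (r + r ^ 2) + (γ * (r + r ^ 2)) ^ 2 ≤ γ * (r + (1 + 4 * γ) * r ^ 2) := by
  nlinarith [mul_nonneg (mul_nonneg (sq_nonneg (γ * r)) (sub_nonneg.mpr hr1.le))
    (by linarith : (0:ℝ) ≤ 3 + r)]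

theorem compound_binomial_mgf_bound (β γ : ℝ) (hβ : 0 < β) (hγ : 0 < γ)
    (hcrit : β * γ ^ 2 = 1) (n : ℕ) (hn : γ ≤ (n : ℝ)) (r : ℝ)
    (hr0 : 0 < r) (hr : r < min 1 (1 / (2 * γ))) :
    (1 - γ / n + (γ / n) * (1 - γ / n + (γ / n) * Real.exp r) ^ (n - 1)) ^ (⌊β * n⌋₊) ≤
      Real.exp (r + (1 + 4 * γ) * r ^ 2) := by
  have hr1 : r < 1 := lt_of_lt_of_le hr (min_le_left _ _)
  have hr2 : r < 1 / (2 * γ) := lt_of_lt_of_le hr (min_le_right _ _)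
  have hnpos : (0:ℝ) < n := lt_of_lt_of_le hγ hn
  have hnne : (n:ℝ) ≠ 0 := ne_of_gt hnpos
  set p : ℝ := γ / n with hp
  have hp0 : 0 < p := div_pos hγ hnpos
  have her : 1 ≤ Real.exp r := Real.one_le_exp hr0.le
  have herm : 0 ≤ Real.exp r - 1 := by linarith
  set A : ℝ := 1 - p + p * Real.exp r with hA
  have hA1 : 1 ≤ A := by
    have := mul_le_mul_of_nonneg_left her hp0.le
    rw [hA]; linarith
  have hA0 : 0 ≤ A := by linarith
  have hAle : A ≤ Real.exp (p * (Real.exp r - 1)) := by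
    calc A = p * (Real.exp r - 1) + 1 := by rw [hA]; ring
    _ ≤ _ := Real.add_one_le_exp _
  have hnm1 : ((n - 1 : ℕ) : ℝ) * p ≤ γ := by
    have h1 : ((n - 1 : ℕ) : ℝ) ≤ (n : ℝ) := by exact_mod_cast Nat.sub_le n 1
    calc ((n - 1 : ℕ) : ℝ) * p ≤ (n : ℝ) * p :=
          mul_le_mul_of_nonneg_right h1 hp0.le
    _ = γ := by rw [hp]; field_simp
  set E : ℝ := Real.exp (γ * (Real.exp r - 1)) with hE
  have hpowE : A ^ (n - 1) ≤ E := by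
    calc A ^ (n - 1) ≤ (Real.exp (p * (Real.exp r - 1))) ^ (n - 1) :=
          pow_le_pow_left₀ hA0 hAle _
    _ = Real.exp (((n - 1 : ℕ) : ℝ) * (p * (Real.exp r - 1))) := by
          rw [← Real.exp_nat_mul]
    _ ≤ E := by
          apply Real.exp_le_exp.mpr
          rw [← mul_assoc]
          exact mul_le_mul_of_nonneg_right hnm1 herm
  have hpow1 : 1 ≤ A ^ (n - 1) := by
    calc (1:ℝ) = 1 ^ (n - 1) := (one_pow _).symm
    _ ≤ A ^ (n - 1) := pow_le_pow_left₀ zero_le_one hA1 _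
  set B : ℝ := 1 - p + p * A ^ (n - 1) with hB
  have hB1 : 1 ≤ B := by
    have := mul_le_mul_of_nonneg_left hpow1 hp0.le
    rw [hB]; linarith
  have hB0 : 0 ≤ B := by linarith
  have hE1 : 1 ≤ E := Real.one_le_exp (by positivity)
  have hBle : B ≤ Real.exp (p * (E - 1)) := by
    calc B = p * (A ^ (n - 1) - 1) + 1 := by rw [hB]; ring
    _ ≤ Real.exp (p * (A ^ (n - 1) - 1)) := Real.add_one_le_exp _
    _ ≤ _ := by
          apply Real.exp_le_exp.mpr
          apply mul_le_mul_of_nonneg_left _ hp0.le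
          linarith
  have hfloor : (⌊β * n⌋₊ : ℝ) ≤ β * n := Nat.floor_le (by positivity)
  have hpE0 : 0 ≤ p * (E - 1) := mul_nonneg hp0.le (by linarith)
  have hmain : B ^ (⌊β * n⌋₊) ≤ Real.exp ((1 / γ) * (E - 1)) := by
    calc B ^ (⌊β * n⌋₊) ≤ (Real.exp (p * (E - 1))) ^ (⌊β * n⌋₊) :=
          pow_le_pow_left₀ hB0 hBle _
    _ = Real.exp ((⌊β * n⌋₊ : ℝ) * (p * (E - 1))) := by rw [← Real.exp_nat_mul]
    _ ≤ Real.exp ((1 / γ) * (E - 1)) := by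
          apply Real.exp_le_exp.mpr
          have h1 : (⌊β * n⌋₊ : ℝ) * (p * (E - 1)) ≤ (β * n) * (p * (E - 1)) :=
            mul_le_mul_of_nonneg_right hfloor hpE0
          have h2 : (β * n) * p = 1 / γ := by
            rw [hp]
            field_simp
            linear_combination hcrit
          calc (⌊β * n⌋₊ : ℝ) * (p * (E - 1)) ≤ (β * n) * (p * (E - 1)) := h1
          _ = ((β * n) * p) * (E - 1) := by ring
          _ = (1 / γ) * (E - 1) := by rw [h2]
  -- final scalar inequality
  have hexp2 : Real.exp r ≤ 1 + r + r ^ 2 := exp_quadratic_bound hr0.le hr1.le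
  set s : ℝ := γ * (Real.exp r - 1) with hs
  have hs0 : 0 ≤ s := mul_nonneg hγ.le herm
  have hγr : γ * r < 1 / 2 := by
    have h := (lt_div_iff₀ (by positivity : (0:ℝ) < 2 * γ)).mp hr2
    nlinarith [h]
  have hs_le : s ≤ γ * (r + r ^ 2) := by
    have h : Real.exp r - 1 ≤ r + r ^ 2 := by linarith
    rw [hs]
    exact mul_le_mul_of_nonneg_left h hγ.le
  have hs1 : s ≤ 1 := by
    nlinarith [hs_le, hγr, mul_nonneg (mul_pos hγ hr0).le (sub_nonneg.mpr hr1.le)]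
  have hE2 : E ≤ 1 + s + s ^ 2 := by rw [hE]; exact exp_quadratic_bound hs0 hs1
  have hkey : E - 1 ≤ γ * (r + (1 + 4 * γ) * r ^ 2) := by
    have hsq : s ^ 2 ≤ (γ * (r + r ^ 2)) ^ 2 := pow_le_pow_left₀ hs0 hs_le 2
    have halg : γ * (r + r ^ 2) + (γ * (r + r ^ 2)) ^ 2 ≤
        γ * (r + (1 + 4 * γ) * r ^ 2) := alg_aux γ r hγ hr0 hr1
    linarith [hE2, hs_le, hsq, halg]
  have hfin : (1 / γ) * (E - 1) ≤ r + (1 + 4 * γ) * r ^ 2 := by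
    rw [div_mul_eq_mul_div, one_mul, div_le_iff₀ hγ]
    linarith [hkey, mul_comm γ (r + (1 + 4 * γ) * r ^ 2)]
  calc B ^ (⌊β * n⌋₊) ≤ Real.exp ((1 / γ) * (E - 1)) := hmain
  _ ≤ Real.exp (r + (1 + 4 * γ) * r ^ 2) := Real.exp_le_exp.mpr hfin
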